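/- Let d ≥ 1, θ* ∈ ℝ^d, and W₀ ∈ ℝ^{d×d} symmetric positive definite. On a probability space (Ω, F, P), let (η_i)_{i≥1} be i.i.d. real random variables with E[η_i] = 0 and E[η_i²] = σ², and let F_s = σ(η₁,…,η_s). For each l ≥ 1 and t = l·d, suppose the actions x₁,…,x_t are such that for every batch k ∈ {1,…,l} the vectors x_{(k−1)d+1},…,x_{kd} almost surely form an orthonormal basis of ℝ^d and each is F_{(k−1)d}-measurable; let θ̂_t = (X_tᵀX_t + W₀)⁻¹X_tᵀY_t with X_t the matrix of actions and Y_t = X_tθ* + (η₁,…,η_t)ᵀ. Then limsup_{l→∞} (t/d²)·E[‖θ̂_t − θ*‖₂²] ≤ σ² (where t = l·d), i.e., the mean square error of the proposed batch algorithm decays at rate at most (d²/t)·σ²·(1+o(1)); in particular the estimator is consistent in mean square. -/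

import Mathlib

open MeasureTheory ProbabilityTheory Matrix Filter


lemma aux_posdef {d : ℕ} {W0 : Matrix (Fin d) (Fin d) ℝ} (hW0 : W0.PosDef)
    {l : ℕ} (hl : 1 ≤ l) : (W0 + (l : ℝ) • (1 : Matrix (Fin d) (Fin d) ℝ)).PosDef := by
  refine hW0.add_posSemidef (PosSemidef.of_dotProduct_mulVec_nonneg ?_ fun v => ?_)
  · simp [Matrix.IsHermitian]
  · have : ((l : ℝ) • (1 : Matrix (Fin d) (Fin d) ℝ)) *ᵥ v = (l : ℝ) • v := by
      simp [Matrix.smul_mulVec]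
    rw [this]
    simp only [star_trivial, dotProduct_smul, smul_eq_mul]
    have h1 : (0:ℝ) ≤ v ⬝ᵥ v := Finset.sum_nonneg fun i _ => mul_self_nonneg _
    positivity

lemma aux_inv_bound {d : ℕ} {W0 : Matrix (Fin d) (Fin d) ℝ} (hW0 : W0.PosDef)
    {l : ℕ} (hl : 1 ≤ l) (v : Fin d → ℝ) :
    ((W0 + (l : ℝ) • 1)⁻¹ *ᵥ v) ⬝ᵥ ((W0 + (l : ℝ) • 1)⁻¹ *ᵥ v) ≤ (v ⬝ᵥ v) / (l : ℝ) ^ 2 := by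
  set A := W0 + (l : ℝ) • (1 : Matrix (Fin d) (Fin d) ℝ) with hA
  have hApd := aux_posdef hW0 hl
  have hdet : IsUnit A.det := (Matrix.isUnit_iff_isUnit_det _).mp hApd.isUnit
  set w := A⁻¹ *ᵥ v with hw
  have hAw : A *ᵥ w = v := by
    rw [hw, Matrix.mulVec_mulVec, Matrix.mul_nonsing_inv _ hdet, Matrix.one_mulVec]
  have hW0n : (0:ℝ) ≤ w ⬝ᵥ (W0 *ᵥ w) := by
    have := hW0.posSemidef.dotProduct_mulVec_nonneg w
    simpa using this
  have h1 : (l : ℝ) * (w ⬝ᵥ w) ≤ w ⬝ᵥ v := by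
    rw [← hAw, hA, Matrix.add_mulVec, dotProduct_add,
      Matrix.smul_mulVec, Matrix.one_mulVec, dotProduct_smul]
    simpa using hW0n
  have hww : (0:ℝ) ≤ w ⬝ᵥ w := Finset.sum_nonneg fun i _ => mul_self_nonneg _
  have hvv : (0:ℝ) ≤ v ⬝ᵥ v := Finset.sum_nonneg fun i _ => mul_self_nonneg _
  have h2 : (w ⬝ᵥ v) ^ 2 ≤ (w ⬝ᵥ w) * (v ⬝ᵥ v) := by
    have := Finset.sum_mul_sq_le_sq_mul_sq Finset.univ w v
    simpa [dotProduct, sq] using this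
  rcases eq_or_lt_of_le hww with h0 | h0
  · rw [← h0]
    positivity
  · rw [le_div_iff₀ (by positivity)]
    have hl1 : (1:ℝ) ≤ (l:ℝ) := by exact_mod_cast hl
    have h3 : ((l:ℝ) * (w ⬝ᵥ w)) ^ 2 ≤ (w ⬝ᵥ v) ^ 2 :=
      pow_le_pow_left₀ (by positivity) h1 2
    nlinarith [h2, h3, h0]

section
variable {d : ℕ} (y : ℕ → Fin d → ℝ)

lemma aux_batch (hd : 1 ≤ d)
    (h : ∀ k : ℕ, ∀ j < d, ∀ j' < d,
      y (k * d + j) ⬝ᵥ y (k * d + j') = if j = j' then (1 : ℝ) else 0)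
    (k : ℕ) (p q : Fin d) :
    (∑ r : Fin d, y (k * d + r) p * y (k * d + r) q) = if p = q then (1:ℝ) else 0 := by
  set M : Matrix (Fin d) (Fin d) ℝ := Matrix.of fun r p => y (k * d + r) p with hM
  have hMMT : M * Mᵀ = 1 := by
    ext r r'
    rw [Matrix.mul_apply]
    have := h k r r.isLt r' r'.isLt
    simp only [dotProduct] at this
    simp only [hM, Matrix.transpose_apply, Matrix.of_apply, Matrix.one_apply]
    rw [this]
    simp [Fin.val_eq_val]
  have hMTM : Mᵀ * M = 1 := mul_eq_one_comm.mp hMMT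
  have := congrFun (congrFun hMTM p) q
  rw [Matrix.mul_apply] at this
  simpa [hM, Matrix.one_apply] using this

lemma aux_dot (hd : 1 ≤ d)
    (h : ∀ k : ℕ, ∀ j < d, ∀ j' < d,
      y (k * d + j) ⬝ᵥ y (k * d + j') = if j = j' then (1 : ℝ) else 0)
    (i i' : ℕ) (hk : i / d = i' / d) :
    y i ⬝ᵥ y i' = if i = i' then (1:ℝ) else 0 := by
  have hd0 : 0 < d := hd
  have h1 := h (i / d) (i % d) (Nat.mod_lt _ hd0) (i' % d) (Nat.mod_lt _ hd0)
  rw [Nat.div_add_mod'] at h1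
  rw [hk, Nat.div_add_mod'] at h1
  rw [h1]
  congr 1
  apply propext
  constructor
  · intro hmod
    rw [← Nat.div_add_mod i d, ← Nat.div_add_mod i' d, hk, hmod]
  · intro he; rw [he]


lemma aux_abs (hd : 1 ≤ d)
    (h : ∀ k : ℕ, ∀ j < d, ∀ j' < d,
      y (k * d + j) ⬝ᵥ y (k * d + j') = if j = j' then (1 : ℝ) else 0)
    (i : ℕ) (p : Fin d) : |y i p| ≤ 1 := by
  have h1 : y i ⬝ᵥ y i = 1 := by
    rw [aux_dot y hd h i i rfl, if_pos rfl]
  rw [abs_le_one_iff_mul_self_le_one]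
  calc y i p * y i p ≤ ∑ q, y i q * y i q :=
        Finset.single_le_sum (f := fun q => y i q * y i q) (fun q _ => mul_self_nonneg _) (Finset.mem_univ p)
    _ = 1 := h1

lemma aux_sum (hd : 1 ≤ d)
    (h : ∀ k : ℕ, ∀ j < d, ∀ j' < d,
      y (k * d + j) ⬝ᵥ y (k * d + j') = if j = j' then (1 : ℝ) else 0)
    (p q : Fin d) : ∀ l : ℕ,
    ∑ i ∈ Finset.range (l * d), y i p * y i q = (l : ℝ) * (if p = q then 1 else 0)
  | 0 => by simp
  | (l + 1) => by
    have : (l + 1) * d = l * d + d := by ring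
    rw [this, Finset.sum_range_add, aux_sum hd h p q l]
    have hb : ∑ i ∈ Finset.range d, y (l * d + i) p * y (l * d + i) q
        = (if p = q then (1:ℝ) else 0) := by
      rw [← Fin.sum_univ_eq_sum_range (fun r => y (l * d + r) p * y (l * d + r) q) d]
      exact aux_batch y hd h l p q
    rw [hb]
    push_cast
    ring

lemma aux_XtX (hd : 1 ≤ d)
    (h : ∀ k : ℕ, ∀ j < d, ∀ j' < d,
      y (k * d + j) ⬝ᵥ y (k * d + j') = if j = j' then (1 : ℝ) else 0)
    (l : ℕ) :
    (Matrix.of fun (i : Fin (l * d)) p => y (i : ℕ) p)ᵀ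
      * (Matrix.of fun (i : Fin (l * d)) p => y (i : ℕ) p)
    = (l : ℝ) • (1 : Matrix (Fin d) (Fin d) ℝ) := by
  ext p q
  rw [Matrix.mul_apply]
  simp only [Matrix.transpose_apply, Matrix.of_apply, Matrix.smul_apply, Matrix.one_apply,
    smul_eq_mul]
  rw [Fin.sum_univ_eq_sum_range (fun i => y i p * y i q) (l * d)]
  exact aux_sum y hd h p q l

end

section
variable {Ω : Type*} [MeasurableSpace Ω] (P : Measure Ω) [IsProbabilityMeasure P]
  (η : ℕ → Ω → ℝ)

/-- the filtration σ-algebra of the first `n` noises -/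
noncomputable def Fn (n : ℕ) : MeasurableSpace Ω :=
  MeasurableSpace.comap (fun ω => (fun i : Fin n => η (i : ℕ) ω)) inferInstance

lemma Fn_eq (n : ℕ) :
    Fn η n = ⨆ i : Fin n, MeasurableSpace.comap (η (i : ℕ)) inferInstance := by
  have hpi : (inferInstance : MeasurableSpace (Fin n → ℝ))
      = ⨆ i : Fin n, MeasurableSpace.comap (fun f : Fin n → ℝ => f i) inferInstance := rfl
  rw [Fn, hpi, MeasurableSpace.comap_iSup]
  congr 1
  funext i
  rw [MeasurableSpace.comap_comp]
  rfl

lemma Fn_le (hηmeas : ∀ i, Measurable (η i)) (n : ℕ) : Fn η n ≤ ‹MeasurableSpace Ω› := by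
  rw [Fn_eq]
  exact iSup_le fun i => measurable_iff_comap_le.mp (hηmeas i)

lemma Fn_mono {n n' : ℕ} (h : n ≤ n') : Fn η n ≤ Fn η n' := by
  rw [Fn_eq, Fn_eq]
  exact iSup_le fun i => le_iSup_of_le (⟨(i : ℕ), lt_of_lt_of_le i.isLt h⟩ : Fin n') le_rfl

lemma Fn_indep (hηmeas : ∀ i, Measurable (η i))
    (hindep : iIndepFun η P)
    {n i' : ℕ} (h : n ≤ i') :
    Indep (Fn η n) (MeasurableSpace.comap (η i') inferInstance) P := by
  have hI : iIndep (fun i => MeasurableSpace.comap (η i) inferInstance) P :=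
    (iIndepFun_iff_iIndep _ _ _).mp hindep
  have hle : ∀ m : ℕ, MeasurableSpace.comap (η m) inferInstance ≤ ‹MeasurableSpace Ω› :=
    fun m => measurable_iff_comap_le.mp (hηmeas m)
  have hbi := indep_biSup_compl hle hI {m | m < n}
  refine indep_of_indep_of_le_left (indep_of_indep_of_le_right hbi ?_) ?_
  · exact le_biSup (fun m : ℕ => MeasurableSpace.comap (η m) inferInstance)
      (show i' ∈ {m | m < n}ᶜ by simp only [Set.mem_compl_iff, Set.mem_setOf_eq]; omega)
  · rw [Fn_eq]
    exact iSup_le fun i => le_biSup (fun m : ℕ => MeasurableSpace.comap (η m) inferInstance)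
      (show (i : ℕ) ∈ {m | m < n} from i.isLt)

lemma Fn_indepFun (hηmeas : ∀ i, Measurable (η i))
    (hindep : iIndepFun η P)
    {n i' : ℕ} (h : n ≤ i') {f : Ω → ℝ} (hf : Measurable[Fn η n] f) :
    IndepFun f (η i') P := by
  rw [IndepFun_iff_Indep]
  exact indep_of_indep_of_le_left (Fn_indep P η hηmeas hindep h)
    (measurable_iff_comap_le.mp hf)

end

section Key
variable {d : ℕ} {Ω : Type*} [MeasurableSpace Ω]
  {P : Measure Ω} [IsProbabilityMeasure P]
  {η : ℕ → Ω → ℝ} {x : ℕ → Ω → Fin d → ℝ}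

lemma key_lemma (hd : 1 ≤ d)
    (θstar : Fin d → ℝ)
    (W0 : Matrix (Fin d) (Fin d) ℝ) (hW0 : W0.PosDef)
    (σ : ℝ)
    (hηmeas : ∀ i, Measurable (η i))
    (hindep : iIndepFun η P)
    (hL1 : ∀ i, Integrable (η i) P)
    (hL2 : ∀ i, Integrable (fun ω => (η i ω) ^ 2) P)
    (hmean : ∀ i, ∫ ω, η i ω ∂P = 0)
    (hvar : ∀ i, ∫ ω, (η i ω) ^ 2 ∂P = σ ^ 2)
    (horth : ∀ᵐ ω ∂P, ∀ k : ℕ, ∀ j < d, ∀ j' < d,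
      x (k * d + j) ω ⬝ᵥ x (k * d + j') ω = if j = j' then (1 : ℝ) else 0)
    (hadapt : ∀ k : ℕ, ∀ j < d, Measurable[Fn η (k * d)] (x (k * d + j)))
    (θhat : (l : ℕ) → Ω → Fin d → ℝ)
    (hθhat : ∀ l ω, θhat l ω =
      (W0 + (Matrix.of fun (i : Fin (l * d)) j => x (i : ℕ) ω j)ᵀ
          * (Matrix.of fun (i : Fin (l * d)) j => x (i : ℕ) ω j))⁻¹
        *ᵥ ((Matrix.of fun (i : Fin (l * d)) j => x (i : ℕ) ω j)ᵀ
          *ᵥ ((Matrix.of fun (i : Fin (l * d)) j => x (i : ℕ) ω j) *ᵥ θstar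
              + fun i : Fin (l * d) => η (i : ℕ) ω)))
    (l : ℕ) (hl : 1 ≤ l) :
    ∫ ω, (θhat l ω - θstar) ⬝ᵥ (θhat l ω - θstar) ∂P
      ≤ ((l * d : ℕ) * σ ^ 2 + (W0 *ᵥ θstar) ⬝ᵥ (W0 *ᵥ θstar)) / (l : ℝ) ^ 2 := by
  have hd0 : 0 < d := hd
  set t := l * d with ht
  set b : Fin d → ℝ := W0 *ᵥ θstar with hb
  -- measurability of x i w.r.t. the filtration and globally
  have hxFn : ∀ i : ℕ, Measurable[Fn η ((i / d) * d)] (x i) := by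
    intro i
    have h1 : i = (i / d) * d + i % d := (Nat.div_add_mod' i d).symm
    have := hadapt (i / d) (i % d) (Nat.mod_lt _ hd0)
    rwa [← h1] at this
  have hxmeas : ∀ i : ℕ, Measurable (x i) := fun i =>
    (hxFn i).mono (Fn_le η hηmeas _) le_rfl
  have hηFn : ∀ i n : ℕ, i < n → Measurable[Fn η n] (η i) := by
    intro i n hin
    have hb : Measurable[Fn η n] (fun ω => (fun j : Fin n => η (j : ℕ) ω)) :=
      measurable_iff_comap_le.mpr le_rfl
    exact (measurable_pi_apply (⟨i, hin⟩ : Fin n)).comp hb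
  -- dot products are measurable
  have hdotmeas : ∀ (i i' : ℕ), Measurable (fun ω => x i ω ⬝ᵥ x i' ω) := by
    intro i i'
    apply Finset.measurable_sum
    intro p _
    exact ((measurable_pi_apply p).comp (hxmeas i)).mul
      ((measurable_pi_apply p).comp (hxmeas i'))
  have hdotFn : ∀ (i i' n : ℕ), Measurable[Fn η n] (x i) → Measurable[Fn η n] (x i') →
      Measurable[Fn η n] (fun ω => x i ω ⬝ᵥ x i' ω) := by
    intro i i' n h1 h2
    apply Finset.measurable_sum
    intro p _
    exact ((measurable_pi_apply p).comp h1).mul ((measurable_pi_apply p).comp h2)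
  -- the summands
  set c : ℕ → ℕ → Ω → ℝ := fun i i' ω => η i ω * η i' ω * (x i ω ⬝ᵥ x i' ω) with hc
  have hcmeas : ∀ i i', Measurable (c i i') := fun i i' =>
    ((hηmeas i).mul (hηmeas i')).mul (hdotmeas i i')
  -- a.e. bounds from orthonormality
  have habs : ∀ᵐ ω ∂P, ∀ (i : ℕ) (p : Fin d), |x i ω p| ≤ 1 := by
    filter_upwards [horth] with ω hω i p
    exact aux_abs (fun i => x i ω) hd hω i p
  have hdotbound : ∀ᵐ ω ∂P, ∀ i i' : ℕ, |x i ω ⬝ᵥ x i' ω| ≤ (d : ℝ) := by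
    filter_upwards [habs] with ω hω i i'
    calc |x i ω ⬝ᵥ x i' ω| ≤ ∑ p, |x i ω p * x i' ω p| :=
          Finset.abs_sum_le_sum_abs _ _
      _ ≤ ∑ _p : Fin d, (1 : ℝ) := by
          apply Finset.sum_le_sum
          intro p _
          rw [abs_mul]
          exact mul_le_one₀ (hω i p) (abs_nonneg _) (hω i' p)
      _ = (d : ℝ) := by simp
  -- integrability of c i i'
  have hcint : ∀ i i', Integrable (c i i') P := by
    intro i i'
    refine Integrable.mono' (((hL2 i).add (hL2 i')).const_mul (d : ℝ))
      (hcmeas i i').aestronglyMeasurable ?_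
    filter_upwards [hdotbound] with ω hω
    have h1 : |η i ω * η i' ω| ≤ η i ω ^ 2 + η i' ω ^ 2 := by
      rw [abs_mul]
      nlinarith [sq_nonneg (|η i ω| - |η i' ω|), sq_abs (η i ω), sq_abs (η i' ω),
        abs_nonneg (η i ω), abs_nonneg (η i' ω)]
    calc ‖c i i' ω‖ = |η i ω * η i' ω| * |x i ω ⬝ᵥ x i' ω| := by
          rw [hc]; simp [abs_mul]
      _ ≤ (η i ω ^ 2 + η i' ω ^ 2) * (d : ℝ) :=
          mul_le_mul h1 (hω i i') (abs_nonneg _) (by positivity)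
      _ = (d : ℝ) * (η i ω ^ 2 + η i' ω ^ 2) := by ring
  -- diagonal integral
  have hdiag : ∀ i : ℕ, ∫ ω, c i i ω ∂P = σ ^ 2 := by
    intro i
    rw [← hvar i]
    apply integral_congr_ae
    filter_upwards [horth] with ω hω
    have h1 : x i ω ⬝ᵥ x i ω = 1 := by
      rw [aux_dot (fun i => x i ω) hd hω i i rfl, if_pos rfl]
    rw [hc]
    simp only [h1, mul_one, sq]
  -- off-diagonal integral, ordered case
  have hoff' : ∀ i i' : ℕ, i / d < i' / d → ∫ ω, c i i' ω ∂P = 0 := by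
    intro i i' hk
    set k' := i' / d with hk'
    have hi'd : i' = k' * d + i' % d := (Nat.div_add_mod' i' d).symm
    have hilt : i < k' * d := (Nat.div_lt_iff_lt_mul hd0).mp hk
    set f : Ω → ℝ := fun ω => η i ω * (x i ω ⬝ᵥ x i' ω) with hf
    have hfFn : Measurable[Fn η (k' * d)] f := by
      apply Measurable.mul (hηFn i _ hilt)
      apply hdotFn
      · exact (hxFn i).mono (Fn_mono η (Nat.mul_le_mul_right d (Nat.le_of_lt hk))) le_rfl
      · have := hadapt k' (i' % d) (Nat.mod_lt _ hd0)
        rwa [← hi'd] at this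
    have hge : k' * d ≤ i' := Nat.le.intro hi'd.symm
    have hindepf : IndepFun f (η i') P := Fn_indepFun P η hηmeas hindep hge hfFn
    have hfint : Integrable f P := by
      refine Integrable.mono' (((hL1 i).abs).const_mul (d : ℝ))
        ((hηmeas i).mul (hdotmeas i i')).aestronglyMeasurable ?_
      filter_upwards [hdotbound] with ω hω
      calc ‖f ω‖ = |η i ω| * |x i ω ⬝ᵥ x i' ω| := by rw [hf]; simp [abs_mul]
        _ ≤ |η i ω| * (d : ℝ) := mul_le_mul_of_nonneg_left (hω i i') (abs_nonneg _)
        _ = (d : ℝ) * |η i ω| := by ring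
    have hcf : ∀ ω, c i i' ω = f ω * η i' ω := by intro ω; rw [hc, hf]; ring
    calc ∫ ω, c i i' ω ∂P = ∫ ω, f ω * η i' ω ∂P := by simp only [hcf]
      _ = (∫ ω, f ω ∂P) * ∫ ω, η i' ω ∂P :=
          hindepf.integral_fun_mul_eq_mul_integral hfint.aestronglyMeasurable (hL1 i').aestronglyMeasurable
      _ = 0 := by rw [hmean i', mul_zero]
  -- off-diagonal integral, general case
  have hoff : ∀ i i' : ℕ, i ≠ i' → ∫ ω, c i i' ω ∂P = 0 := by
    intro i i' hne
    rcases lt_trichotomy (i / d) (i' / d) with h | h | h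
    · exact hoff' i i' h
    · have hz : ∀ᵐ ω ∂P, c i i' ω = 0 := by
        filter_upwards [horth] with ω hω
        have h1 : x i ω ⬝ᵥ x i' ω = 0 := by
          rw [aux_dot (fun i => x i ω) hd hω i i' h, if_neg hne]
        rw [hc]
        simp only [h1, mul_zero]
      rw [integral_congr_ae hz, integral_zero]
    · have hswap : ∀ ω, c i i' ω = c i' i ω := by
        intro ω
        rw [hc]
        simp only
        rw [dotProduct_comm]
        ring
      simp only [hswap]
      exact hoff' i' i h
  -- the noise vector image
  set S : Ω → Fin d → ℝ := fun ω p => ∑ i ∈ Finset.range t, η i ω * x i ω p with hS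
  have hSdot : ∀ ω, S ω ⬝ᵥ S ω
      = ∑ i ∈ Finset.range t, ∑ i' ∈ Finset.range t, c i i' ω := by
    intro ω
    calc S ω ⬝ᵥ S ω
        = ∑ p, ∑ i ∈ Finset.range t, ∑ i' ∈ Finset.range t,
            (η i ω * x i ω p) * (η i' ω * x i' ω p) := by
          refine Finset.sum_congr rfl fun p _ => ?_
          rw [hS]
          exact Finset.sum_mul_sum _ _ _ _
      _ = ∑ i ∈ Finset.range t, ∑ p, ∑ i' ∈ Finset.range t,
            (η i ω * x i ω p) * (η i' ω * x i' ω p) := Finset.sum_comm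
      _ = ∑ i ∈ Finset.range t, ∑ i' ∈ Finset.range t, ∑ p,
            (η i ω * x i ω p) * (η i' ω * x i' ω p) :=
          Finset.sum_congr rfl fun i _ => Finset.sum_comm
      _ = ∑ i ∈ Finset.range t, ∑ i' ∈ Finset.range t, c i i' ω := by
          refine Finset.sum_congr rfl fun i _ => Finset.sum_congr rfl fun i' _ => ?_
          rw [hc]
          simp only [dotProduct, Finset.mul_sum]
          refine Finset.sum_congr rfl fun p _ => by ring
  set e : ℕ → Ω → ℝ := fun i ω => η i ω * (x i ω ⬝ᵥ b) with he
  have hSb : ∀ ω, S ω ⬝ᵥ b = ∑ i ∈ Finset.range t, e i ω := by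
    intro ω
    calc S ω ⬝ᵥ b = ∑ p, ∑ i ∈ Finset.range t, (η i ω * x i ω p) * b p := by
          refine Finset.sum_congr rfl fun p _ => ?_
          rw [hS]
          exact Finset.sum_mul _ _ _
      _ = ∑ i ∈ Finset.range t, ∑ p, (η i ω * x i ω p) * b p := Finset.sum_comm
      _ = ∑ i ∈ Finset.range t, e i ω := by
          refine Finset.sum_congr rfl fun i _ => ?_
          rw [he]
          simp only [dotProduct, Finset.mul_sum]
          refine Finset.sum_congr rfl fun p _ => by ring
  have hbdotmeas : ∀ i : ℕ, Measurable (fun ω => x i ω ⬝ᵥ b) := by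
    intro i
    apply Finset.measurable_sum
    intro p _
    exact ((measurable_pi_apply p).comp (hxmeas i)).mul measurable_const
  have hbabs : ∀ᵐ ω ∂P, ∀ i : ℕ, |x i ω ⬝ᵥ b| ≤ ∑ p, |b p| := by
    filter_upwards [habs] with ω hω i
    calc |x i ω ⬝ᵥ b| ≤ ∑ p, |x i ω p * b p| := Finset.abs_sum_le_sum_abs _ _
      _ ≤ ∑ p, |b p| := by
          refine Finset.sum_le_sum fun p _ => ?_
          rw [abs_mul]
          calc |x i ω p| * |b p| ≤ 1 * |b p| :=
                mul_le_mul_of_nonneg_right (hω i p) (abs_nonneg _)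
            _ = |b p| := one_mul _
  have heint : ∀ i : ℕ, Integrable (e i) P := by
    intro i
    refine Integrable.mono' (((hL1 i).abs).const_mul (∑ p, |b p|))
      ((hηmeas i).mul (hbdotmeas i)).aestronglyMeasurable ?_
    filter_upwards [hbabs] with ω hω
    calc ‖e i ω‖ = |η i ω| * |x i ω ⬝ᵥ b| := by rw [he]; simp [abs_mul]
      _ ≤ |η i ω| * ∑ p, |b p| := mul_le_mul_of_nonneg_left (hω i) (abs_nonneg _)
      _ = (∑ p, |b p|) * |η i ω| := by ring
  have heval : ∀ i : ℕ, ∫ ω, e i ω ∂P = 0 := by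
    intro i
    have hile : (i / d) * d ≤ i := Nat.div_mul_le_self i d
    have hgFn : Measurable[Fn η ((i / d) * d)] (fun ω => x i ω ⬝ᵥ b) := by
      apply Finset.measurable_sum
      intro p _
      exact ((measurable_pi_apply p).comp (hxFn i)).mul measurable_const
    have hindepe : IndepFun (fun ω => x i ω ⬝ᵥ b) (η i) P :=
      Fn_indepFun P η hηmeas hindep hile hgFn
    have hgint : Integrable (fun ω => x i ω ⬝ᵥ b) P := by
      refine Integrable.mono' (integrable_const (∑ p, |b p|))
        (hbdotmeas i).aestronglyMeasurable ?_
      filter_upwards [hbabs] with ω hω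
      exact hω i
    have hee : ∀ ω, e i ω = (x i ω ⬝ᵥ b) * η i ω := by intro ω; rw [he]; ring
    calc ∫ ω, e i ω ∂P = ∫ ω, (x i ω ⬝ᵥ b) * η i ω ∂P := by simp only [hee]
      _ = (∫ ω, x i ω ⬝ᵥ b ∂P) * ∫ ω, η i ω ∂P :=
          hindepe.integral_fun_mul_eq_mul_integral hgint.aestronglyMeasurable (hL1 i).aestronglyMeasurable
      _ = 0 := by rw [hmean i, mul_zero]
  -- integrability and integral values
  have hSSint : Integrable (fun ω => S ω ⬝ᵥ S ω) P := by
    have : (fun ω => S ω ⬝ᵥ S ω)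
        = fun ω => ∑ i ∈ Finset.range t, ∑ i' ∈ Finset.range t, c i i' ω :=
      funext hSdot
    rw [this]
    exact integrable_finset_sum _ fun i _ => integrable_finset_sum _ fun i' _ => hcint i i'
  have hSbint : Integrable (fun ω => S ω ⬝ᵥ b) P := by
    have : (fun ω => S ω ⬝ᵥ b) = fun ω => ∑ i ∈ Finset.range t, e i ω := funext hSb
    rw [this]
    exact integrable_finset_sum _ fun i _ => heint i
  have hSSval : ∫ ω, S ω ⬝ᵥ S ω ∂P = (t : ℝ) * σ ^ 2 := by
    have h1 : ∫ ω, S ω ⬝ᵥ S ω ∂P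
        = ∑ i ∈ Finset.range t, ∑ i' ∈ Finset.range t, ∫ ω, c i i' ω ∂P := by
      rw [integral_congr_ae (Filter.Eventually.of_forall hSdot),
        integral_finset_sum _ fun i _ =>
          integrable_finset_sum _ fun i' _ => hcint i i']
      exact Finset.sum_congr rfl fun i _ => integral_finset_sum _ fun i' _ => hcint i i'
    rw [h1]
    have h2 : ∀ i ∈ Finset.range t,
        ∑ i' ∈ Finset.range t, ∫ ω, c i i' ω ∂P = σ ^ 2 := by
      intro i hi
      rw [Finset.sum_eq_single_of_mem i hi (fun i' _ hne => hoff i i' (Ne.symm hne))]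
      exact hdiag i
    rw [Finset.sum_congr rfl h2]
    simp [mul_comm]
  have hSbval : ∫ ω, S ω ⬝ᵥ b ∂P = 0 := by
    rw [integral_congr_ae (Filter.Eventually.of_forall hSb),
      integral_finset_sum _ fun i _ => heint i]
    exact Finset.sum_eq_zero fun i _ => heval i
  -- the quadratic expansion
  have hexp : ∀ ω, (S ω - b) ⬝ᵥ (S ω - b)
      = S ω ⬝ᵥ S ω - 2 * (S ω ⬝ᵥ b) + b ⬝ᵥ b := by
    intro ω
    rw [sub_dotProduct, dotProduct_sub, dotProduct_sub,
      dotProduct_comm b (S ω)]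
    ring
  have hgint2 : Integrable (fun ω => (S ω - b) ⬝ᵥ (S ω - b)) P := by
    have : (fun ω => (S ω - b) ⬝ᵥ (S ω - b))
        = fun ω => S ω ⬝ᵥ S ω - 2 * (S ω ⬝ᵥ b) + b ⬝ᵥ b := funext hexp
    rw [this]
    exact (hSSint.sub (hSbint.const_mul 2)).add (integrable_const _)
  have hint2 : Integrable (fun ω => 2 * (S ω ⬝ᵥ b)) P := by
    exact hSbint.const_mul 2
  have hint1 : Integrable (fun ω => S ω ⬝ᵥ S ω - 2 * (S ω ⬝ᵥ b)) P := by
    exact hSSint.sub hint2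
  have hgval : ∫ ω, (S ω - b) ⬝ᵥ (S ω - b) ∂P = (t : ℝ) * σ ^ 2 + b ⬝ᵥ b := by
    rw [integral_congr_ae (Filter.Eventually.of_forall hexp),
      integral_add hint1 (integrable_const _),
      integral_sub hSSint hint2, MeasureTheory.integral_const_mul, hSSval, hSbval,
      integral_const]
    simp
  -- a.e. formula for the estimator error
  have hApd := aux_posdef hW0 hl
  have hdet : IsUnit (W0 + (l : ℝ) • (1 : Matrix (Fin d) (Fin d) ℝ)).det :=
    (Matrix.isUnit_iff_isUnit_det _).mp hApd.isUnit
  have haef : ∀ᵐ ω ∂P, θhat l ω - θstar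
      = (W0 + (l : ℝ) • 1)⁻¹ *ᵥ (S ω - b) := by
    filter_upwards [horth] with ω hω
    have hXtX := aux_XtX (fun i => x i ω) hd hω l
    rw [hθhat l ω, hXtX]
    have h2 : (Matrix.of fun (i : Fin (l * d)) p => x (i : ℕ) ω p)ᵀ
        *ᵥ ((Matrix.of fun (i : Fin (l * d)) p => x (i : ℕ) ω p) *ᵥ θstar
            + fun i : Fin (l * d) => η (i : ℕ) ω)
        = (l : ℝ) • θstar + S ω := by
      rw [Matrix.mulVec_add, Matrix.mulVec_mulVec, hXtX]
      congr 1
      · rw [Matrix.smul_mulVec, Matrix.one_mulVec]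
      · funext p
        rw [hS]
        simp only [Matrix.mulVec, dotProduct, Matrix.transpose_apply,
          Matrix.of_apply]
        rw [← Fin.sum_univ_eq_sum_range (fun i => η i ω * x i ω p) (l * d)]
        exact Finset.sum_congr rfl fun i _ => mul_comm _ _
    rw [h2]
    have h3 : (W0 + (l : ℝ) • 1) *ᵥ θstar = b + (l : ℝ) • θstar := by
      rw [Matrix.add_mulVec, Matrix.smul_mulVec, Matrix.one_mulVec, hb]
    have h4 : θstar = (W0 + (l : ℝ) • 1)⁻¹ *ᵥ ((W0 + (l : ℝ) • 1) *ᵥ θstar) := by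
      rw [Matrix.mulVec_mulVec, Matrix.nonsing_inv_mul _ hdet, Matrix.one_mulVec]
    calc (W0 + (l : ℝ) • 1)⁻¹ *ᵥ ((l : ℝ) • θstar + S ω) - θstar
        = (W0 + (l : ℝ) • 1)⁻¹ *ᵥ ((l : ℝ) • θstar + S ω)
          - (W0 + (l : ℝ) • 1)⁻¹ *ᵥ ((W0 + (l : ℝ) • 1) *ᵥ θstar) := by rw [← h4]
      _ = (W0 + (l : ℝ) • 1)⁻¹ *ᵥ (((l : ℝ) • θstar + S ω)
            - ((W0 + (l : ℝ) • 1) *ᵥ θstar)) := by rw [Matrix.mulVec_sub]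
      _ = (W0 + (l : ℝ) • 1)⁻¹ *ᵥ (S ω - b) := by
          rw [h3]
          congr 1
          abel
  -- pointwise bound and conclusion
  have hbnd : ∀ᵐ ω ∂P, (θhat l ω - θstar) ⬝ᵥ (θhat l ω - θstar)
      ≤ ((S ω - b) ⬝ᵥ (S ω - b)) / (l : ℝ) ^ 2 := by
    filter_upwards [haef] with ω hω
    rw [hω]
    exact aux_inv_bound hW0 hl _
  have hfinal : ∫ ω, (θhat l ω - θstar) ⬝ᵥ (θhat l ω - θstar) ∂P
      ≤ ∫ ω, ((S ω - b) ⬝ᵥ (S ω - b)) / (l : ℝ) ^ 2 ∂P := by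
    refine integral_mono_of_nonneg ?_ (hgint2.div_const _) hbnd
    exact Filter.Eventually.of_forall fun ω =>
      Finset.sum_nonneg fun p _ => mul_self_nonneg _
  calc ∫ ω, (θhat l ω - θstar) ⬝ᵥ (θhat l ω - θstar) ∂P
      ≤ ∫ ω, ((S ω - b) ⬝ᵥ (S ω - b)) / (l : ℝ) ^ 2 ∂P := hfinal
    _ = (∫ ω, (S ω - b) ⬝ᵥ (S ω - b) ∂P) / (l : ℝ) ^ 2 := integral_div _ _
    _ = ((t : ℝ) * σ ^ 2 + b ⬝ᵥ b) / (l : ℝ) ^ 2 := by rw [hgval]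
    _ = ((l * d : ℕ) * σ ^ 2 + (W0 *ᵥ θstar) ⬝ᵥ (W0 *ᵥ θstar)) / (l : ℝ) ^ 2 := by
        rw [ht, hb]

end Key

/-- The batch algorithm (each consecutive block of `d` rounds plays an
orthonormal basis of `ℝ^d` measurable w.r.t. the noise of the previous blocks) produces a
mean-square-consistent estimator: `limsup_{l→∞} (t/d²)·E[‖θ̂_t − θ*‖₂²] ≤ σ²`, where
`t = l·d`; i.e. the MSE decays at rate at most `(d²/t)·σ²·(1+o(1))`. -/
theorem stmt_16 {d : ℕ} (hd : 1 ≤ d) {Ω : Type*} [MeasurableSpace Ω]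
    (P : Measure Ω) [IsProbabilityMeasure P]
    (θstar : Fin d → ℝ)
    (W0 : Matrix (Fin d) (Fin d) ℝ) (hW0 : W0.PosDef)
    (σ : ℝ)
    (η : ℕ → Ω → ℝ) (hηmeas : ∀ i, Measurable (η i))
    (hindep : iIndepFun η P)
    (hident : ∀ i, IdentDistrib (η i) (η 0) P P)
    (hL1 : ∀ i, Integrable (η i) P)
    (hL2 : ∀ i, Integrable (fun ω => (η i ω) ^ 2) P)
    (hmean : ∀ i, ∫ ω, η i ω ∂P = 0)
    (hvar : ∀ i, ∫ ω, (η i ω) ^ 2 ∂P = σ ^ 2)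
    (x : ℕ → Ω → Fin d → ℝ)
    -- within every batch `k`, the `d` actions form an orthonormal basis of `ℝ^d` a.s.
    (horth : ∀ᵐ ω ∂P, ∀ k : ℕ, ∀ j < d, ∀ j' < d,
      x (k * d + j) ω ⬝ᵥ x (k * d + j') ω = if j = j' then (1 : ℝ) else 0)
    -- every action of batch `k` is measurable w.r.t. `F_{k·d} = σ(η₀, …, η_{k·d−1})`
    (hadapt : ∀ k : ℕ, ∀ j < d, Measurable[MeasurableSpace.comap
      (fun ω => (fun i : Fin (k * d) => η (i : ℕ) ω)) inferInstance] (x (k * d + j)))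
    (θhat : (l : ℕ) → Ω → Fin d → ℝ)
    (hθhat : ∀ l ω, θhat l ω =
      (W0 + (Matrix.of fun (i : Fin (l * d)) j => x (i : ℕ) ω j)ᵀ
          * (Matrix.of fun (i : Fin (l * d)) j => x (i : ℕ) ω j))⁻¹
        *ᵥ ((Matrix.of fun (i : Fin (l * d)) j => x (i : ℕ) ω j)ᵀ
          *ᵥ ((Matrix.of fun (i : Fin (l * d)) j => x (i : ℕ) ω j) *ᵥ θstar
              + fun i : Fin (l * d) => η (i : ℕ) ω))) :
    atTop.limsup (fun l : ℕ => (((l * d : ℕ) : ℝ) / (d : ℝ) ^ 2)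
        * ∫ ω, (θhat l ω - θstar) ⬝ᵥ (θhat l ω - θstar) ∂P) ≤ σ ^ 2 := by
  have hd0 : 0 < d := hd
  set B : ℝ := (W0 *ᵥ θstar) ⬝ᵥ (W0 *ᵥ θstar) with hB
  have hadapt' : ∀ k : ℕ, ∀ j < d, Measurable[Fn η (k * d)] (x (k * d + j)) := hadapt
  have hkey := key_lemma hd θstar W0 hW0 σ hηmeas hindep hL1 hL2 hmean hvar horth
    hadapt' θhat hθhat
  set u : ℕ → ℝ := fun l => (((l * d : ℕ) : ℝ) / (d : ℝ) ^ 2)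
      * ∫ ω, (θhat l ω - θstar) ⬝ᵥ (θhat l ω - θstar) ∂P with hu
  set g : ℕ → ℝ := fun l => σ ^ 2 + B / ((d : ℝ) * l) with hg
  have hle : ∀ᶠ l in atTop, u l ≤ g l := by
    rw [Filter.eventually_atTop]
    refine ⟨1, fun l hl => ?_⟩
    have h1 := hkey l hl
    have hl0 : (0:ℝ) < (l:ℝ) := by exact_mod_cast hl
    have hd0' : (0:ℝ) < (d:ℝ) := by exact_mod_cast hd0
    have hcoef : (0:ℝ) ≤ ((l * d : ℕ) : ℝ) / (d : ℝ) ^ 2 := by positivity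
    calc u l ≤ (((l * d : ℕ) : ℝ) / (d : ℝ) ^ 2)
          * (((l * d : ℕ) * σ ^ 2 + B) / (l : ℝ) ^ 2) :=
          mul_le_mul_of_nonneg_left h1 hcoef
      _ = g l := by
          rw [hg]
          push_cast
          field_simp
  have htend : Tendsto g atTop (nhds (σ ^ 2)) := by
    have h0 : Tendsto (fun l : ℕ => B / ((d : ℝ) * l)) atTop (nhds 0) := by
      have h1 : (fun l : ℕ => B / ((d : ℝ) * l)) = fun l : ℕ => (B / (d : ℝ)) / (l : ℝ) := by
        funext l
        rw [div_div]
      rw [h1]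
      exact tendsto_const_div_atTop_nhds_zero_nat _
    have h2 := Filter.Tendsto.add (tendsto_const_nhds (x := σ ^ 2) (f := (atTop : Filter ℕ))) h0
    simpa using h2
  have hubdd : IsCoboundedUnder (· ≤ ·) atTop u := by
    apply isCoboundedUnder_le_of_eventually_le (x := 0) atTop
    refine Filter.Eventually.of_forall fun l => ?_
    have hint : (0:ℝ) ≤ ∫ ω, (θhat l ω - θstar) ⬝ᵥ (θhat l ω - θstar) ∂P :=
      integral_nonneg fun ω => Finset.sum_nonneg fun p _ => mul_self_nonneg _
    have hcoef : (0:ℝ) ≤ ((l * d : ℕ) : ℝ) / (d : ℝ) ^ 2 := by positivity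
    exact mul_nonneg hcoef hint
  calc atTop.limsup u ≤ atTop.limsup g :=
        limsup_le_limsup hle hubdd htend.isBoundedUnder_le
    _ = σ ^ 2 := htend.limsup_eq
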